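/- Let ω(x,y) = (2x/(x²+(y+1)²), (x²+y²−1)/(x²+(y+1)²)). Then for every x ∈ ℝ: (i) |ω(x,0)| = 1, i.e. ω(x,0) ∈ S¹; and (ii) −∂_yω(x,0) = (2/(1+x²))·ω(x,0); consequently the inward normal derivative −∂_yω(x,0) is orthogonal to the tangent space T_{ω(x,0)}S¹, so ω is a solution of the stationary free boundary problem on the half-plane. -/

import Mathlib

noncomputable section

/-- The harmonic extension of the canonical half-harmonic map. -/
def omega (x y : ℝ) : ℝ × ℝ :=
  (2 * x / (x ^ 2 + (y + 1) ^ 2), (x ^ 2 + y ^ 2 - 1) / (x ^ 2 + (y + 1) ^ 2))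

/-- Euclidean dot product on `ℝ × ℝ`. -/
def dot (p q : ℝ × ℝ) : ℝ := p.1 * q.1 + p.2 * q.2

lemma hasDerivAt_omega (x : ℝ) :
    HasDerivAt (fun y => omega x y)
      ((0 * (x ^ 2 + (0 + 1 : ℝ) ^ 2) - 2 * x * 2) / (x ^ 2 + (0 + 1 : ℝ) ^ 2) ^ 2,
       (0 * (x ^ 2 + (0 + 1 : ℝ) ^ 2) - (x ^ 2 + (0 : ℝ) ^ 2 - 1) * 2) / (x ^ 2 + (0 + 1 : ℝ) ^ 2) ^ 2)
      0 := by
  have hne : x ^ 2 + ((0 : ℝ) + 1) ^ 2 ≠ 0 := by positivity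
  have hden : HasDerivAt (fun y : ℝ => x ^ 2 + (y + 1) ^ 2) 2 0 := by
    have h1 : HasDerivAt (fun y : ℝ => y + 1) 1 0 := (hasDerivAt_id 0).add_const 1
    have := (h1.pow 2).const_add (x ^ 2)
    simpa using this
  have hnum1 : HasDerivAt (fun _ : ℝ => 2 * x) 0 0 := hasDerivAt_const 0 (2 * x)
  have hnum2 : HasDerivAt (fun y : ℝ => x ^ 2 + y ^ 2 - 1) 0 0 := by
    have := ((hasDerivAt_pow 2 (0 : ℝ)).const_add (x ^ 2)).sub_const 1
    simpa using this
  exact HasDerivAt.prodMk (hnum1.div hden hne) (hnum2.div hden hne)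

theorem omega_free_boundary :
    ∀ x : ℝ,
      dot (omega x 0) (omega x 0) = 1 ∧
      -deriv (fun y => omega x y) 0 = (2 / (1 + x ^ 2)) • omega x 0 ∧
      ∀ w : ℝ × ℝ, dot w (omega x 0) = 0 →
        dot (-deriv (fun y => omega x y) 0) w = 0 := by
  intro x
  have hne : x ^ 2 + (1 : ℝ) ≠ 0 := by positivity
  have hd := (hasDerivAt_omega x).deriv
  have h1 : dot (omega x 0) (omega x 0) = 1 := by
    simp only [dot, omega]
    field_simp
    ring
  have h2 : -deriv (fun y => omega x y) 0 = (2 / (1 + x ^ 2)) • omega x 0 := by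
    rw [hd]
    simp only [omega, Prod.smul_mk, Prod.neg_mk, Prod.mk.injEq, smul_eq_mul]
    constructor <;> · field_simp; ring
  refine ⟨h1, h2, fun w hw => ?_⟩
  rw [h2]
  simp only [dot, omega, smul_eq_mul, Prod.smul_mk] at hw ⊢
  linear_combination (2 / (1 + x ^ 2)) * hw
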